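/- arXiv:1505.03827 — 2 statements merged into one kernel-verified Lean document; each statement's English description precedes it below -/
import Mathlib

section
/- For the one-to-one infection network system in equilibrium-centered form, with Lyapunov function V = Σ_i a_i U(H_i, H_i*) + Σ_i (a_i/(e_i n_i)) U(P_i, P_i*), where U(x, x*) = x − x* − x* log(x/x*), one has dV/dt = −(Σ_i a_i H_i − Σ_i a_i H_i*)² ≤ 0 along every positive solution. -/
open Filter Finset

lemma statement18_aux (f : ℝ → ℝ) (f' c t : ℝ) (hf : HasDerivAt f f' t)
    (hposf : ∀ s, 0 < f s) (hc : 0 < c) :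
    HasDerivAt (fun s => f s - c - c * Real.log (f s / c))
      (f' - c * (f' / f t)) t := by
  have h1 : (fun s => f s - c - c * Real.log (f s / c))
      = fun s => f s - c - c * (Real.log (f s) - Real.log c) := by
    funext s; rw [Real.log_div (hposf s).ne' hc.ne']
  rw [h1]
  exact (hf.sub_const c).sub (((hf.log (hposf t).ne').sub_const (Real.log c)).const_mul c)

/-- for the one-to-one infection network in equilibrium-centered form, the
Lyapunov function `V = Σ_i a_i U(H_i, H_i*) + Σ_i (a_i/(e_i n_i)) U(P_i, P_i*)` satisfies
`dV/dt = −(Σ_i a_i H_i − Σ_i a_i H_i*)² ≤ 0` along every positive solution. -/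
theorem statement18
    (n : ℕ) (a e ν Hs Ps : ℕ → ℝ)
    (ha : ∀ i < n, 0 < a i) (he : ∀ i < n, 0 < e i) (hν : ∀ i < n, 0 < ν i)
    (hHs : ∀ i < n, 0 < Hs i) (hPs : ∀ i < n, 0 < Ps i)
    (H P : ℝ → ℕ → ℝ)
    (hpos : ∀ t, ∀ i < n, 0 < H t i ∧ 0 < P t i)
    (hH : ∀ t, ∀ i < n, HasDerivAt (fun s => H s i)
      (H t i * ((∑ j ∈ Finset.range n, a j * (Hs j - H t j)) + Ps i - P t i)) t)
    (hP : ∀ t, ∀ i < n, HasDerivAt (fun s => P s i)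
      (e i * ν i * P t i * (H t i - Hs i)) t) :
    ∀ t : ℝ,
      HasDerivAt (fun s =>
          (∑ i ∈ Finset.range n, a i * (H s i - Hs i - Hs i * Real.log (H s i / Hs i)))
          + ∑ i ∈ Finset.range n,
              a i / (e i * ν i) * (P s i - Ps i - Ps i * Real.log (P s i / Ps i)))
        (-((∑ i ∈ Finset.range n, a i * H t i) - ∑ i ∈ Finset.range n, a i * Hs i) ^ 2) t ∧
      -((∑ i ∈ Finset.range n, a i * H t i) - ∑ i ∈ Finset.range n, a i * Hs i) ^ 2 ≤ 0 := by
  intro t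
  refine ⟨?_, neg_nonpos.mpr (sq_nonneg _)⟩
  set S := ∑ j ∈ Finset.range n, a j * (Hs j - H t j) with hS
  have key1 : ∀ i ∈ Finset.range n,
      HasDerivAt (fun s => a i * (H s i - Hs i - Hs i * Real.log (H s i / Hs i)))
        (a i * (H t i - Hs i) * (S + Ps i - P t i)) t := by
    intro i hi
    rw [Finset.mem_range] at hi
    have h1 := (statement18_aux (fun s => H s i) _ (Hs i) t (hH t i hi)
      (fun s => (hpos s i hi).1) (hHs i hi)).const_mul (a i)
    refine h1.congr_deriv ?_
    have hHne : H t i ≠ 0 := (hpos t i hi).1.ne'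
    field_simp
    ring
  have key2 : ∀ i ∈ Finset.range n,
      HasDerivAt (fun s => a i / (e i * ν i) * (P s i - Ps i - Ps i * Real.log (P s i / Ps i)))
        (a i * (P t i - Ps i) * (H t i - Hs i)) t := by
    intro i hi
    rw [Finset.mem_range] at hi
    have h1 := (statement18_aux (fun s => P s i) _ (Ps i) t (hP t i hi)
      (fun s => (hpos s i hi).2) (hPs i hi)).const_mul (a i / (e i * ν i))
    refine h1.congr_deriv ?_
    have hPne : P t i ≠ 0 := (hpos t i hi).2.ne'
    have hene : e i ≠ 0 := (he i hi).ne'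
    have hνne : ν i ≠ 0 := (hν i hi).ne'
    field_simp
  have hd := (HasDerivAt.fun_sum key1).add (HasDerivAt.fun_sum key2)
  refine hd.congr_deriv ?_
  rw [← Finset.sum_add_distrib]
  have hcong : ∀ i ∈ Finset.range n,
      a i * (H t i - Hs i) * (S + Ps i - P t i) + a i * (P t i - Ps i) * (H t i - Hs i)
        = (a i * H t i - a i * Hs i) * S := by
    intro i _; ring
  rw [Finset.sum_congr rfl hcong, ← Finset.sum_mul, Finset.sum_sub_distrib]
  have hSval : S = (∑ i ∈ Finset.range n, a i * Hs i) - ∑ i ∈ Finset.range n, a i * H t i := by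
    rw [hS, ← Finset.sum_sub_distrib]
    exact Finset.sum_congr rfl fun i _ => by ring
  rw [hSval]; ring
end

section
/- Any entire solution of the decoupled family of planar Lotka-Volterra predator-prey systems H_i' = H_i(P_i* − P_i), P_i' = e_i n_i P_i(H_i − H_i*) (i = 1,...,n) with all components positive conserves the quantity Π_{i=1}^n P_i(t)^{a_i/(e_i n_i)} provided it also satisfies the constraint Σ_i a_i H_i(t) = Σ_i a_i H_i* for all t. Moreover, each pair (H_i, P_i) lies on a closed level curve of the conserved quantity e_i n_i(H_i − H_i* log H_i) + (P_i − P_i* log P_i), hence is either periodic or the constant equilibrium (H_i*, P_i*). -/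
open scoped NNReal Topology

namespace S19

open Real Set

noncomputable def phi (s : ℝ) : ℝ := Real.exp s - 1 - s

lemma phi_nonneg (s : ℝ) : 0 ≤ phi s := by
  unfold phi; nlinarith [Real.add_one_le_exp s]

lemma phi_pos {s : ℝ} (hs : s ≠ 0) : 0 < phi s := by
  unfold phi; nlinarith [Real.add_one_lt_exp hs]

lemma eq_zero_of_phi_le {s : ℝ} (h : phi s ≤ 0) : s = 0 := by
  by_contra hs; exact absurd h (not_le.mpr (phi_pos hs))

lemma continuous_phi : Continuous phi := by unfold phi; continuity

lemma hasDerivAt_phi (s : ℝ) : HasDerivAt phi (Real.exp s - 1) s := by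
  have := ((Real.hasDerivAt_exp s).sub_const 1).sub (hasDerivAt_id s)
  exact this

lemma abs_le_of_phi_le {s B : ℝ} (h : phi s ≤ B) : |s| ≤ B + 1 := by
  unfold phi at h
  have h2 : 2*s ≤ Real.exp s := by
    have e1 := Real.exp_add (s/2) (s/2)
    rw [add_halves] at e1
    nlinarith [Real.add_one_le_exp (s/2), sq_nonneg (1 - s/2), Real.exp_pos (s/2)]
  rcases le_or_gt 0 s with hs | hs
  · rw [abs_of_nonneg hs]; nlinarith
  · rw [abs_of_neg hs]; nlinarith [Real.exp_pos s]

lemma phi_scale_lt {r s : ℝ} (hr : 1 < r) (hs : s ≠ 0) : phi s < phi (r*s) := by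
  have hr0 : (0:ℝ) < r := by linarith
  have h := strictConvexOn_exp.2 (Set.mem_univ (r*s)) (Set.mem_univ (0:ℝ))
    (by simpa using mul_ne_zero (by positivity : r ≠ 0) hs)
    (by positivity : (0:ℝ) < 1/r)
    (sub_pos.mpr ((div_lt_one hr0).mpr hr)) (by ring)
  simp only [smul_eq_mul] at h
  have he : (1/r) * (r*s) + (1 - 1/r) * 0 = s := by field_simp; ring
  rw [he, Real.exp_zero] at h
  have h3 := mul_lt_mul_of_pos_left h hr0
  field_simp at h3
  have h4 : r * phi s < phi (r * s) := by unfold phi; nlinarith [h3]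
  have h5 : phi s ≤ r * phi s := by nlinarith [phi_nonneg s]
  linarith

lemma phi_scale_le {r s : ℝ} (hr : 1 < r) : phi s ≤ phi (r*s) := by
  rcases eq_or_ne s 0 with rfl | hs
  · simp
  · exact (phi_scale_lt hr hs).le

lemma level_scale {A B : ℝ} (hA : 0 < A) (hB : 0 < B) {x0 y0 r : ℝ} (hr : 1 < r)
    (hne : ¬(x0 = 0 ∧ y0 = 0)) :
    A * phi x0 + B * phi y0 < A * phi (r*x0) + B * phi (r*y0) := by
  rcases not_and_or.mp hne with hx | hy
  · have h1 := phi_scale_lt hr hx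
    have h2 := phi_scale_le (s := y0) hr
    nlinarith
  · have h1 := phi_scale_le (s := x0) hr
    have h2 := phi_scale_lt hr hy
    nlinarith

lemma mul_exp_sub_one_nonneg (s : ℝ) : 0 ≤ s * (Real.exp s - 1) := by
  rcases le_or_gt 0 s with hs | hs
  · have : (1:ℝ) ≤ Real.exp s := by simpa using Real.exp_le_exp.2 hs
    nlinarith
  · have : Real.exp s ≤ 1 := by simpa using Real.exp_le_exp.2 hs.le
    nlinarith

lemma mul_exp_sub_one_pos {s : ℝ} (hs : s ≠ 0) : 0 < s * (Real.exp s - 1) := by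
  rcases lt_or_gt_of_ne hs with h | h
  · have : Real.exp s < 1 := by simpa using Real.exp_lt_exp.2 h
    nlinarith
  · have : (1:ℝ) < Real.exp s := by simpa using Real.exp_lt_exp.2 h
    nlinarith

lemma exp_lip {R a b : ℝ} (ha : |a| ≤ R) (hb : |b| ≤ R) :
    |Real.exp a - Real.exp b| ≤ Real.exp R * |a - b| := by
  have hconv : Convex ℝ (Icc (-R) R) := convex_Icc _ _
  have := hconv.norm_image_sub_le_of_norm_hasDerivWithin_le
    (f := Real.exp) (f' := Real.exp) (C := Real.exp R)
    (fun x _ => (Real.hasDerivAt_exp x).hasDerivWithinAt)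
    (fun x hx => by
      rw [Real.norm_eq_abs, abs_of_pos (Real.exp_pos x)]
      exact Real.exp_le_exp.2 hx.2)
    (abs_le.mp hb) (abs_le.mp ha)
  simpa [Real.norm_eq_abs] using this

set_option maxHeartbeats 2000000 in
lemma pair_main (c A B : ℝ) (hc : 0 < c) (hA : 0 < A) (hB : 0 < B)
    (h p : ℝ → ℝ) (hpos : ∀ t, 0 < h t ∧ 0 < p t)
    (hh : ∀ t, HasDerivAt h (h t * (B - p t)) t)
    (hp : ∀ t, HasDerivAt p (c * p t * (h t - A)) t) :
    (∀ t s : ℝ, c * (h t - A * Real.log (h t)) + (p t - B * Real.log (p t))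
      = c * (h s - A * Real.log (h s)) + (p s - B * Real.log (p s))) ∧
    ((∃ T > (0:ℝ), ∀ t, h (t+T) = h t ∧ p (t+T) = p t) ∨ (∀ t, h t = A ∧ p t = B)) := by
  have hne : ∀ t, h t ≠ 0 := fun t => (hpos t).1.ne'
  have pne : ∀ t, p t ≠ 0 := fun t => (hpos t).2.ne'
  -- log-derivatives
  have dlh : ∀ t, HasDerivAt (fun t => Real.log (h t)) (B - p t) t := by
    intro t
    have hd := (Real.hasDerivAt_log (hne t)).comp t (hh t)
    have h2 : (h t)⁻¹ * (h t * (B - p t)) = B - p t := inv_mul_cancel_left₀ (hne t) _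
    rw [h2] at hd; exact hd
  have dlp : ∀ t, HasDerivAt (fun t => Real.log (p t)) (c * (h t - A)) t := by
    intro t
    have hd := (Real.hasDerivAt_log (pne t)).comp t (hp t)
    have h2 : (p t)⁻¹ * (c * p t * (h t - A)) = c * (h t - A) := by
      rw [show c * p t * (h t - A) = p t * (c * (h t - A)) by ring]
      exact inv_mul_cancel_left₀ (pne t) _
    rw [h2] at hd; exact hd
  -- conservation of V
  have hVd : ∀ t, HasDerivAt
      (fun t => c * (h t - A * Real.log (h t)) + (p t - B * Real.log (p t))) 0 t := by
    intro t
    have d1 := ((hh t).sub ((dlh t).const_mul A)).const_mul c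
    have d2 := (hp t).sub ((dlp t).const_mul B)
    have := d1.add d2
    have hval : c * (h t * (B - p t) - A * (B - p t)) +
        (c * p t * (h t - A) - B * (c * (h t - A))) = 0 := by ring
    rw [hval] at this
    exact this
  have hVconst : ∀ t s : ℝ,
      c * (h t - A * Real.log (h t)) + (p t - B * Real.log (p t))
      = c * (h s - A * Real.log (h s)) + (p s - B * Real.log (p s)) :=
    fun t s => is_const_of_deriv_eq_zero
      (fun u => (hVd u).differentiableAt) (fun u => (hVd u).deriv) t s
  refine ⟨hVconst, ?_⟩
  -- coordinates
  set x : ℝ → ℝ := fun t => Real.log (h t) - Real.log A with hxdef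
  set y : ℝ → ℝ := fun t => Real.log (p t) - Real.log B with hydef
  have hex : ∀ t, Real.exp (x t) = h t / A := by
    intro t
    rw [hxdef]; simp only []
    rw [Real.exp_sub, Real.exp_log (hpos t).1, Real.exp_log hA]
  have hey : ∀ t, Real.exp (y t) = p t / B := by
    intro t
    rw [hydef]; simp only []
    rw [Real.exp_sub, Real.exp_log (hpos t).2, Real.exp_log hB]
  have hx : ∀ t, HasDerivAt x (B * (1 - Real.exp (y t))) t := by
    intro t
    have := (dlh t).sub_const (Real.log A)
    have hval : B - p t = B * (1 - Real.exp (y t)) := by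
      rw [hey t]; field_simp
    rw [hval] at this; exact this
  have hy : ∀ t, HasDerivAt y (c * A * (Real.exp (x t) - 1)) t := by
    intro t
    have := (dlp t).sub_const (Real.log B)
    have hval : c * (h t - A) = c * A * (Real.exp (x t) - 1) := by
      rw [hex t]; field_simp
    rw [hval] at this; exact this
  -- conserved W in log coordinates
  set W : ℝ → ℝ := fun t => c * A * phi (x t) + B * phi (y t) with hWdef
  have hWd : ∀ t, HasDerivAt W 0 t := by
    intro t
    have d1 := ((hasDerivAt_phi (x t)).comp t (hx t)).const_mul (c * A)
    have d2 := ((hasDerivAt_phi (y t)).comp t (hy t)).const_mul B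
    have := d1.add d2
    have hval : c * A * ((Real.exp (x t) - 1) * (B * (1 - Real.exp (y t)))) +
        B * ((Real.exp (y t) - 1) * (c * A * (Real.exp (x t) - 1))) = 0 := by ring
    rw [hval] at this
    exact this
  set k : ℝ := W 0 with hkdef
  have hWk : ∀ t, W t = k :=
    fun t => is_const_of_deriv_eq_zero
      (fun u => (hWd u).differentiableAt) (fun u => (hWd u).deriv) t 0
  have hknn : 0 ≤ k := by
    rw [hkdef, hWdef]
    have := phi_nonneg (x 0); have := phi_nonneg (y 0)
    positivity
  -- recovering h, p from x, y
  have hrec : ∀ t, h t = A * Real.exp (x t) ∧ p t = B * Real.exp (y t) := by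
    intro t
    rw [hex t, hey t]
    constructor <;> field_simp
  rcases eq_or_lt_of_le hknn with hk0 | hkpos
  · -- equilibrium case
    right
    intro t
    have ht : c * A * phi (x t) + B * phi (y t) = 0 := by
      have := hWk t; rw [← hk0] at this; rw [hWdef] at this; exact this
    have e1 : 0 ≤ c * A * phi (x t) := mul_nonneg (by positivity) (phi_nonneg _)
    have e2 : 0 ≤ B * phi (y t) := mul_nonneg hB.le (phi_nonneg _)
    have hcA : 0 < c * A := by positivity
    have hx0 : x t = 0 := eq_zero_of_phi_le (by nlinarith)
    have hy0 : y t = 0 := eq_zero_of_phi_le (by nlinarith)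
    have := hrec t
    rw [hx0, hy0] at this
    simpa using this
  · left
    have hcA : 0 < c * A := by positivity
    have hzne : ∀ t, ¬(x t = 0 ∧ y t = 0) := by
      intro t ht
      have hw : c * A * phi (x t) + B * phi (y t) = k := hWk t
      rw [ht.1, ht.2] at hw
      simp [phi] at hw
      linarith
    -- bounds
    set R : ℝ := k/(c*A) + 1 + (k/B + 1) with hRdef
    have hbnd : ∀ t, |x t| ≤ R ∧ |y t| ≤ R := by
      intro t
      have hw : c * A * phi (x t) + B * phi (y t) = k := hWk t
      have e1 : 0 ≤ c * A * phi (x t) := mul_nonneg hcA.le (phi_nonneg _)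
      have e2 : 0 ≤ B * phi (y t) := mul_nonneg hB.le (phi_nonneg _)
      have b1 : phi (x t) ≤ k/(c*A) := by
        rw [le_div_iff₀ hcA]; nlinarith [hw, e2]
      have b2 : phi (y t) ≤ k/B := by
        rw [le_div_iff₀ hB]; nlinarith [hw, e1]
      have d1 : 0 ≤ k/(c*A) := div_nonneg hknn hcA.le
      have d2 : 0 ≤ k/B := div_nonneg hknn hB.le
      constructor
      · have := abs_le_of_phi_le b1; rw [hRdef]; linarith
      · have := abs_le_of_phi_le b2; rw [hRdef]; linarith
    -- continuity
    have hxc : Continuous x :=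
      continuous_iff_continuousAt.mpr fun t => (hx t).differentiableAt.continuousAt
    have hyc : Continuous y :=
      continuous_iff_continuousAt.mpr fun t => (hy t).differentiableAt.continuousAt
    -- complex setup
    set w : ℝ → ℂ := fun t => (x t : ℂ) + (y t : ℂ) * Complex.I with hwdef
    set num : ℝ → ℂ := fun t =>
      ((B * (1 - Real.exp (y t)) : ℝ) : ℂ) + ((c * A * (Real.exp (x t) - 1) : ℝ) : ℂ) * Complex.I
      with hnumdef
    have hwd : ∀ t, HasDerivAt w (num t) t := fun t =>
      ((hx t).ofReal_comp).add (((hy t).ofReal_comp).mul_const _)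
    have hwne : ∀ t, w t ≠ 0 := by
      intro t hw0
      apply hzne t
      rw [hwdef] at hw0
      simp only [Complex.ext_iff, Complex.add_re, Complex.add_im, Complex.ofReal_re,
        Complex.ofReal_im, Complex.mul_re, Complex.mul_im, Complex.I_re, Complex.I_im,
        Complex.zero_re, Complex.zero_im] at hw0
      constructor
      · have := hw0.1; linarith
      · have := hw0.2; linarith
    set g : ℝ → ℂ := fun t => num t / w t with hgdef
    have hnc : Continuous num := by
      apply Continuous.add
      · exact Complex.continuous_ofReal.comp
          (continuous_const.mul (continuous_const.sub (Real.continuous_exp.comp hyc)))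
      · exact (Complex.continuous_ofReal.comp
          (continuous_const.mul ((Real.continuous_exp.comp hxc).sub continuous_const))).mul
          continuous_const
    have hwc : Continuous w :=
      (Complex.continuous_ofReal.comp hxc).add
        ((Complex.continuous_ofReal.comp hyc).mul continuous_const)
    have hgc : Continuous g := hnc.div hwc hwne
    set ψ : ℝ → ℂ := fun t => ∫ s in (0:ℝ)..t, g s with hψdef
    have hψd : ∀ t, HasDerivAt ψ (g t) t := fun t =>
      (hgc.integral_hasStrictDerivAt 0 t).hasDerivAt
    have hψ0 : ψ 0 = 0 := intervalIntegral.integral_same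
    have hwg : ∀ t, w t * g t = num t := by
      intro t
      rw [hgdef]
      exact mul_div_cancel₀ _ (hwne t)
    have hwe : ∀ t, w t = w 0 * Complex.exp (ψ t) := by
      have hDd : ∀ t, HasDerivAt (fun t => w t * Complex.exp (-ψ t)) 0 t := by
        intro t
        have hexp := ((hψd t).neg).cexp
        have hd := (hwd t).mul hexp
        have hval : num t * Complex.exp (-ψ t) + w t * (Complex.exp (-ψ t) * -g t) = 0 := by
          have : w t * (Complex.exp (-ψ t) * -g t) = -(w t * g t) * Complex.exp (-ψ t) := by ring
          rw [this, hwg t]; ring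
        rw [show (num t * Complex.exp ((-ψ) t) + w t * (Complex.exp ((-ψ) t) * -g t)) = 0 from hval] at hd
        exact hd
      have hconst : ∀ t, w t * Complex.exp (-ψ t) = w 0 := by
        intro t
        have := is_const_of_deriv_eq_zero
          (fun u => (hDd u).differentiableAt) (fun u => (hDd u).deriv) t 0
        simpa [hψ0] using this
      intro t
      have := hconst t
      have h2 := congrArg (fun z => z * Complex.exp (ψ t)) this
      rw [mul_assoc, ← Complex.exp_add] at h2
      simpa using h2
    set θ : ℝ → ℝ := fun t => (ψ t).im with hθdef
    have hθd : ∀ t, HasDerivAt θ ((g t).im) t := fun t =>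
      (Complex.imCLM.hasFDerivAt.comp_hasDerivAt t (hψd t))
    have hθ0 : θ 0 = 0 := by rw [hθdef]; simp [hψ0]
    have gim : ∀ t, (g t).im =
        (c*A*(x t)*(Real.exp (x t) - 1) + B*(y t)*(Real.exp (y t) - 1))
          / ((x t)^2 + (y t)^2) := by
      intro t
      rw [hgdef, hnumdef, hwdef]
      simp only [Complex.div_im, Complex.normSq_add_mul_I, Complex.add_im, Complex.add_re,
        Complex.ofReal_re, Complex.ofReal_im, Complex.mul_im, Complex.mul_re,
        Complex.I_re, Complex.I_im]
      ring
    -- compact level set and minimum angular speed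
    set Kset : Set (ℝ × ℝ) := {z | c * A * phi z.1 + B * phi z.2 = k} with hKdef
    have hKmem : ∀ t, ((x t, y t) : ℝ × ℝ) ∈ Kset := fun t => hWk t
    have hKsub : Kset ⊆ Metric.closedBall 0 R := by
      intro z hz
      rw [hKdef] at hz
      have e1 : 0 ≤ c * A * phi z.1 := mul_nonneg hcA.le (phi_nonneg _)
      have e2 : 0 ≤ B * phi z.2 := mul_nonneg hB.le (phi_nonneg _)
      have hzk : c * A * phi z.1 + B * phi z.2 = k := hz
      have b1 : phi z.1 ≤ k/(c*A) := by rw [le_div_iff₀ hcA]; nlinarith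
      have b2 : phi z.2 ≤ k/B := by rw [le_div_iff₀ hB]; nlinarith
      have d1 : 0 ≤ k/(c*A) := div_nonneg hknn hcA.le
      have d2 : 0 ≤ k/B := div_nonneg hknn hB.le
      have a1 := abs_le_of_phi_le b1
      have a2 := abs_le_of_phi_le b2
      rw [Metric.mem_closedBall, dist_zero_right, Prod.norm_def]
      apply max_le
      · rw [Real.norm_eq_abs]; rw [hRdef]; linarith
      · rw [Real.norm_eq_abs]; rw [hRdef]; linarith
    have hKcont : Continuous (fun z : ℝ × ℝ => c * A * phi z.1 + B * phi z.2) :=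
      (continuous_const.mul (continuous_phi.comp continuous_fst)).add
        (continuous_const.mul (continuous_phi.comp continuous_snd))
    have hKcomp : IsCompact Kset :=
      (isCompact_closedBall 0 R).of_isClosed_subset
        (isClosed_eq hKcont continuous_const) hKsub
    have hKne : Kset.Nonempty := ⟨(x 0, y 0), hKmem 0⟩
    have hKnz : ∀ z ∈ Kset, z ≠ 0 := by
      intro z hz h0
      rw [hKdef] at hz
      rw [h0] at hz
      simp [phi] at hz
      linarith
    set q : ℝ × ℝ → ℝ := fun z =>
      (c*A*z.1*(Real.exp z.1 - 1) + B*z.2*(Real.exp z.2 - 1)) / (z.1^2 + z.2^2) with hqdef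
    have hqden : ∀ z ∈ Kset, z.1^2 + z.2^2 ≠ 0 := by
      intro z hz hd
      apply hKnz z hz
      have h1 : z.1 = 0 := by nlinarith [sq_nonneg z.1, sq_nonneg z.2]
      have h2 : z.2 = 0 := by nlinarith [sq_nonneg z.1, sq_nonneg z.2]
      exact Prod.ext h1 h2
    have hqc : ContinuousOn q Kset := by
      apply ContinuousOn.div
      · fun_prop
      · fun_prop
      · exact hqden
    obtain ⟨z₀, hz₀K, hz₀min⟩ := hKcomp.exists_isMinOn hKne hqc
    set ε : ℝ := q z₀ with hεdef
    have hεpos : 0 < ε := by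
      rw [hεdef, hqdef]
      have hz₀ne : z₀ ≠ 0 := hKnz z₀ hz₀K
      have hden : 0 < z₀.1^2 + z₀.2^2 := by
        rcases (lt_or_eq_of_le (by positivity : (0:ℝ) ≤ z₀.1^2 + z₀.2^2)) with h | h
        · exact h
        · exact absurd (h.symm) (hqden z₀ hz₀K)
      apply div_pos _ hden
      have hcoord : z₀.1 ≠ 0 ∨ z₀.2 ≠ 0 := by
        by_contra hcon
        push_neg at hcon
        exact hz₀ne (Prod.ext hcon.1 hcon.2)
      rcases hcoord with h1 | h2
      · have q1 := mul_pos hcA (mul_exp_sub_one_pos h1)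
        have q2 := mul_nonneg hB.le (mul_exp_sub_one_nonneg z₀.2)
        linarith
      · have q1 := mul_nonneg hcA.le (mul_exp_sub_one_nonneg z₀.1)
        have q2 := mul_pos hB (mul_exp_sub_one_pos h2)
        linarith
    have hθ'ge : ∀ t, ε ≤ (g t).im := by
      intro t
      have := hz₀min (hKmem t)
      rw [gim t]
      exact this
    -- growth of the angle
    have hugrow : ∀ t : ℝ, 0 ≤ t → ε * t ≤ θ t := by
      intro t ht
      have hup : ∀ u, HasDerivAt (fun t => θ t - ε * t) ((g u).im - ε) u := by
        intro u
        have := (hθd u).sub ((hasDerivAt_id u).const_mul ε); rw [mul_one] at this; exact this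
      have hmono : Monotone (fun t => θ t - ε * t) := by
        apply monotone_of_deriv_nonneg
        · exact fun u => ((hup u).differentiableAt)
        · intro u
          rw [(hup u).deriv]
          linarith [hθ'ge u]
      have := hmono ht
      simp only [hθ0] at this
      simpa using this
    have hθc : Continuous θ :=
      continuous_iff_continuousAt.mpr fun t => (hθd t).differentiableAt.continuousAt
    set t1 : ℝ := (2*Real.pi + 1)/ε with ht1def
    have ht1pos : 0 < t1 := by
      apply div_pos _ hεpos
      have := Real.pi_pos
      linarith
    have hθt1 : 2*Real.pi + 1 ≤ θ t1 := by
      have := hugrow t1 ht1pos.le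
      rw [ht1def] at this ⊢
      rw [mul_div_cancel₀ _ hεpos.ne'] at this
      exact this
    have h2π : (2*Real.pi) ∈ Icc (θ 0) (θ t1) := by
      rw [hθ0]
      constructor
      · positivity
      · linarith
    obtain ⟨T, hTmem, hθT⟩ := intermediate_value_Icc ht1pos.le hθc.continuousOn h2π
    have hTpos : 0 < T := by
      rcases lt_or_eq_of_le hTmem.1 with hlt | heq
      · exact hlt
      · exfalso
        rw [← heq, hθ0] at hθT
        have := Real.pi_pos
        linarith
    -- the return point
    set r : ℝ := Real.exp ((ψ T).re) with hrdef
    have hr0 : 0 < r := Real.exp_pos _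
    have hexpψ : Complex.exp (ψ T) = (r : ℂ) := by
      have hsplit : ψ T = ((ψ T).re : ℂ) + ((ψ T).im : ℂ) * Complex.I :=
        (Complex.re_add_im (ψ T)).symm
      rw [hsplit, Complex.exp_add]
      have him : ((ψ T).im : ℂ) * Complex.I = 2*Real.pi*Complex.I := by
        have : (ψ T).im = θ T := rfl
        rw [this, hθT]
        push_cast
        ring
      rw [him, Complex.exp_two_pi_mul_I, mul_one, hrdef, Complex.ofReal_exp]
    have hwT : w T = (r : ℂ) * w 0 := by
      rw [hwe T, hexpψ]; ring
    have hxyT : x T = r * x 0 ∧ y T = r * y 0 := by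
      have hre := congrArg Complex.re hwT
      have him := congrArg Complex.im hwT
      rw [hwdef] at hre him
      simp only [Complex.add_re, Complex.add_im, Complex.ofReal_re, Complex.ofReal_im,
        Complex.mul_re, Complex.mul_im, Complex.I_re, Complex.I_im, mul_zero, mul_one,
        zero_mul, sub_zero, add_zero, zero_add, zero_sub, neg_zero] at hre him
      exact ⟨hre, him⟩
    -- the scaling factor must be 1
    have hzT : x T = x 0 ∧ y T = y 0 := by
      rcases lt_trichotomy r 1 with hlt | heq | hgt
      · exfalso
        have hinv : 1 < 1/r := by rw [lt_div_iff₀ hr0]; linarith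
        have hx0T : x 0 = (1/r) * x T := by
          rw [hxyT.1]; field_simp
        have hy0T : y 0 = (1/r) * y T := by
          rw [hxyT.2]; field_simp
        have hlev := level_scale hcA hB hinv (hzne T)
        rw [← hx0T, ← hy0T] at hlev
        have h1 : c * A * phi (x T) + B * phi (y T) = k := hWk T
        have h2 : c * A * phi (x 0) + B * phi (y 0) = k := hWk 0
        linarith
      · rw [heq, one_mul, one_mul] at hxyT
        exact hxyT
      · exfalso
        have hlev := level_scale hcA hB hgt (hzne 0)
        rw [← hxyT.1, ← hxyT.2] at hlev
        have h1 : c * A * phi (x T) + B * phi (y T) = k := hWk T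
        have h2 : c * A * phi (x 0) + B * phi (y 0) = k := hWk 0
        linarith
    -- propagate by uniqueness of solutions
    refine ⟨T, hTpos, ?_⟩
    set zfun : ℝ → ℝ × ℝ := fun t => (x t, y t) with hzfdef
    set vf : ℝ × ℝ → ℝ × ℝ := fun z =>
      (B * (1 - Real.exp z.2), c * A * (Real.exp z.1 - 1)) with hvfdef
    have hzd : ∀ t, HasDerivAt zfun (vf (zfun t)) t := fun t => (hx t).prodMk (hy t)
    have hzmem : ∀ t, zfun t ∈ Metric.closedBall (0:ℝ×ℝ) R := fun t => hKsub (hKmem t)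
    set Kc : ℝ≥0 := Real.toNNReal ((max B (c*A)) * Real.exp R) with hKcdef
    have hKcval : (Kc : ℝ) = (max B (c*A)) * Real.exp R :=
      Real.coe_toNNReal _ (by positivity)
    have hlip : LipschitzOnWith Kc vf (Metric.closedBall 0 R) := by
      rw [lipschitzOnWith_iff_norm_sub_le]
      intro z hz z' hz'
      rw [Metric.mem_closedBall, dist_zero_right, Prod.norm_def] at hz hz'
      have hz1 : |z.1| ≤ R := le_trans (le_max_left _ _) hz
      have hz2 : |z.2| ≤ R := le_trans (le_max_right _ _) hz
      have hz1' : |z'.1| ≤ R := le_trans (le_max_left _ _) hz'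
      have hz2' : |z'.2| ≤ R := le_trans (le_max_right _ _) hz'
      have hsub1 : |z.1 - z'.1| ≤ ‖z - z'‖ := by
        rw [Prod.norm_def]
        exact le_trans (by rw [Prod.fst_sub, Real.norm_eq_abs]) (le_max_left _ _)
      have hsub2 : |z.2 - z'.2| ≤ ‖z - z'‖ := by
        rw [Prod.norm_def]
        exact le_trans (by rw [Prod.snd_sub, Real.norm_eq_abs]) (le_max_right _ _)
      rw [hKcval, Prod.norm_def]
      apply max_le
      · have he := exp_lip hz2' hz2
        have h1 : (vf z - vf z').1 = B * (Real.exp z'.2 - Real.exp z.2) := by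
          rw [hvfdef]; simp only [Prod.fst_sub]; ring
        rw [h1, Real.norm_eq_abs, abs_mul, abs_of_pos hB]
        have hmax : B ≤ max B (c*A) := le_max_left _ _
        have hRe : (0:ℝ) < Real.exp R := Real.exp_pos R
        have hnn : (0:ℝ) ≤ ‖z - z'‖ := norm_nonneg _
        calc B * |Real.exp z'.2 - Real.exp z.2| ≤ B * (Real.exp R * |z'.2 - z.2|) := by
              apply mul_le_mul_of_nonneg_left _ hB.le
              have : |z'.2 - z.2| = |z.2 - z'.2| := abs_sub_comm _ _
              rw [this]
              exact exp_lip hz2' hz2 |>.trans_eq (by rw [abs_sub_comm])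
          _ ≤ (max B (c*A)) * Real.exp R * ‖z - z'‖ := by
              have h3 : |z'.2 - z.2| ≤ ‖z - z'‖ := by rw [abs_sub_comm]; exact hsub2
              have := mul_le_mul hmax (mul_le_mul_of_nonneg_left h3 hRe.le)
                (by positivity) (le_trans hB.le hmax)
              calc B * (Real.exp R * |z'.2 - z.2|)
                  ≤ max B (c*A) * (Real.exp R * ‖z - z'‖) := this
                _ = (max B (c*A)) * Real.exp R * ‖z - z'‖ := by ring
      · have h1 : (vf z - vf z').2 = c * A * (Real.exp z.1 - Real.exp z'.1) := by
          rw [hvfdef]; simp only [Prod.snd_sub]; ring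
        rw [h1, Real.norm_eq_abs, abs_mul, abs_of_pos hcA]
        have hmax : c*A ≤ max B (c*A) := le_max_right _ _
        have hRe : (0:ℝ) < Real.exp R := Real.exp_pos R
        calc c*A * |Real.exp z.1 - Real.exp z'.1| ≤ c*A * (Real.exp R * |z.1 - z'.1|) :=
              mul_le_mul_of_nonneg_left (exp_lip hz1 hz1') hcA.le
          _ ≤ (max B (c*A)) * Real.exp R * ‖z - z'‖ := by
              have := mul_le_mul hmax (mul_le_mul_of_nonneg_left hsub1 hRe.le)
                (by positivity) (le_trans hcA.le hmax)
              calc c*A * (Real.exp R * |z.1 - z'.1|)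
                  ≤ max B (c*A) * (Real.exp R * ‖z - z'‖) := this
                _ = (max B (c*A)) * Real.exp R * ‖z - z'‖ := by ring
    intro τ
    have key : zfun (τ + T) = zfun τ := by
      have hb1 : (0:ℝ) ∈ Ioo (-(|τ|+1)) (|τ|+1) :=
        ⟨by linarith [abs_nonneg τ], by linarith [abs_nonneg τ]⟩
      have hIoo : τ ∈ Ioo (-(|τ|+1)) (|τ|+1) :=
        ⟨by linarith [neg_abs_le τ], by linarith [le_abs_self τ]⟩
      have heq0 : zfun (0 + T) = zfun 0 := by
        rw [zero_add]
        exact Prod.ext hzT.1 hzT.2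
      exact ODE_solution_unique_of_mem_Ioo (fun _ _ => hlip) hb1
        (fun u _ => ⟨by have := (hzd (u+T)).scomp u ((hasDerivAt_id u).add_const T); rw [one_smul] at this; exact this,
          hzmem (u+T)⟩)
        (fun u _ => ⟨hzd u, hzmem u⟩) heq0 hIoo
    have hxk : x (τ + T) = x τ := congrArg Prod.fst key
    have hyk : y (τ + T) = y τ := congrArg Prod.snd key
    constructor
    · rw [(hrec (τ+T)).1, (hrec τ).1, hxk]
    · rw [(hrec (τ+T)).2, (hrec τ).2, hyk]

end S19



open Filter Finset

/-- an entire positive solution of the decoupled planar predator–prey systems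
`H_i' = H_i(P_i* − P_i)`, `P_i' = e_i n_i P_i(H_i − H_i*)` satisfying
`Σ_i a_i H_i(t) = Σ_i a_i H_i*` conserves `Π_i P_i^{a_i/(e_i n_i)}`; each pair `(H_i, P_i)`
conserves `e_i n_i(H_i − H_i* log H_i) + (P_i − P_i* log P_i)` and is either periodic or the
constant equilibrium `(H_i*, P_i*)`. -/
theorem statement19
    (n : ℕ) (a e ν Hs Ps : ℕ → ℝ)
    (ha : ∀ i < n, 0 < a i) (he : ∀ i < n, 0 < e i) (hν : ∀ i < n, 0 < ν i)
    (hHs : ∀ i < n, 0 < Hs i) (hPs : ∀ i < n, 0 < Ps i)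
    (H P : ℝ → ℕ → ℝ)
    (hpos : ∀ t : ℝ, ∀ i < n, 0 < H t i ∧ 0 < P t i)
    (hH : ∀ t : ℝ, ∀ i < n, HasDerivAt (fun s => H s i) (H t i * (Ps i - P t i)) t)
    (hP : ∀ t : ℝ, ∀ i < n, HasDerivAt (fun s => P s i)
      (e i * ν i * P t i * (H t i - Hs i)) t)
    (hsum : ∀ t : ℝ, ∑ i ∈ Finset.range n, a i * H t i = ∑ i ∈ Finset.range n, a i * Hs i) :
    (∀ t s : ℝ,
      (∏ i ∈ Finset.range n, P t i ^ (a i / (e i * ν i)))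
        = ∏ i ∈ Finset.range n, P s i ^ (a i / (e i * ν i))) ∧
    (∀ i < n, ∀ t s : ℝ,
      e i * ν i * (H t i - Hs i * Real.log (H t i)) + (P t i - Ps i * Real.log (P t i))
        = e i * ν i * (H s i - Hs i * Real.log (H s i)) + (P s i - Ps i * Real.log (P s i))) ∧
    (∀ i < n,
      (∃ T > (0:ℝ), ∀ t : ℝ, H (t + T) i = H t i ∧ P (t + T) i = P t i) ∨
      (∀ t : ℝ, H t i = Hs i ∧ P t i = Ps i)) := by
  have hpair : ∀ i < n,
      (∀ t s : ℝ, e i * ν i * (H t i - Hs i * Real.log (H t i))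
          + (P t i - Ps i * Real.log (P t i))
        = e i * ν i * (H s i - Hs i * Real.log (H s i))
          + (P s i - Ps i * Real.log (P s i))) ∧
      ((∃ T > (0:ℝ), ∀ t : ℝ, H (t + T) i = H t i ∧ P (t + T) i = P t i) ∨
        (∀ t : ℝ, H t i = Hs i ∧ P t i = Ps i)) := by
    intro i hi
    exact S19.pair_main (e i * ν i) (Hs i) (Ps i)
      (by have := he i hi; have := hν i hi; positivity) (hHs i hi) (hPs i hi)
      (fun t => H t i) (fun t => P t i)
      (fun t => hpos t i hi) (fun t => hH t i hi) (fun t => hP t i hi)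
  refine ⟨?_, fun i hi => (hpair i hi).1, fun i hi => (hpair i hi).2⟩
  -- conservation of the product
  have hSd : ∀ t, HasDerivAt
      (fun t => ∑ i ∈ Finset.range n, (a i / (e i * ν i)) * Real.log (P t i)) 0 t := by
    intro t
    have hterm : ∀ i ∈ Finset.range n, HasDerivAt
        (fun t => (a i / (e i * ν i)) * Real.log (P t i)) (a i * (H t i - Hs i)) t := by
      intro i hi
      have hi' := Finset.mem_range.mp hi
      have hPne : P t i ≠ 0 := ((hpos t i hi').2).ne'
      have heν : e i * ν i ≠ 0 := by
        have := he i hi'; have := hν i hi'; positivity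
      have hd := ((Real.hasDerivAt_log hPne).comp t (hP t i hi')).const_mul (a i / (e i * ν i))
      have hval : (a i / (e i * ν i)) * ((P t i)⁻¹ * (e i * ν i * P t i * (H t i - Hs i)))
          = a i * (H t i - Hs i) := by
        have he0 : e i ≠ 0 := (he i hi').ne'; have hν0 : ν i ≠ 0 := (hν i hi').ne'
        field_simp
      rw [hval] at hd
      exact hd
    have := HasDerivAt.fun_sum hterm
    have hz : ∑ i ∈ Finset.range n, a i * (H t i - Hs i) = 0 := by
      have h1 := hsum t
      simp only [mul_sub]
      rw [Finset.sum_sub_distrib]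
      rw [h1]
      ring
    rw [hz] at this
    exact this
  have hSconst : ∀ t s : ℝ,
      (∑ i ∈ Finset.range n, (a i / (e i * ν i)) * Real.log (P t i))
        = ∑ i ∈ Finset.range n, (a i / (e i * ν i)) * Real.log (P s i) :=
    fun t s => is_const_of_deriv_eq_zero
      (fun u => (hSd u).differentiableAt) (fun u => (hSd u).deriv) t s
  intro t s
  have hprod : ∀ u : ℝ, (∏ i ∈ Finset.range n, P u i ^ (a i / (e i * ν i)))
      = Real.exp (∑ i ∈ Finset.range n, (a i / (e i * ν i)) * Real.log (P u i)) := by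
    intro u
    rw [Real.exp_sum]
    apply Finset.prod_congr rfl
    intro i hi
    have hi' := Finset.mem_range.mp hi
    rw [Real.rpow_def_of_pos ((hpos u i hi').2)]
    rw [mul_comm]
  rw [hprod t, hprod s, hSconst t s]
end
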